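/- Let n ≥ 1 and consider strategy matrices, i.e., real matrices with n columns and full column rank n. For a strategy A and query q ∈ ℝⁿ define Error_A(q) = ‖A‖₂² · qᵀ(AᵀA)⁻¹q, where ‖A‖₂ is the maximum Euclidean column norm of A. Say a strategy B is strictly more efficient than A if Error_B(q) < Error_A(q) for every nonzero q ∈ ℝⁿ, and say A is minimal if there is no strategy B with Error_B(q) ≤ Error_A(q) for all q ∈ ℝⁿ and Error_B(q) < Error_A(q) for some q ∈ ℝⁿ. Then a strategy matrix A is minimal if and only if it is column-uniform, i.e., all columns of A have the same Euclidean norm. -/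

import Mathlib

open Matrix BigOperators

/-- The maximum Euclidean (L2) column norm of a matrix (its L2 sensitivity). -/
noncomputable def l2Sens {p n : ℕ} (A : Matrix (Fin p) (Fin n) ℝ) : ℝ :=
  ⨆ j, Real.sqrt (∑ i, (A i j) ^ 2)

/-- The (normalized) error of query `q` under strategy `A` in the
(ε,δ)-matrix mechanism: `Error_A(q) = ‖A‖₂² · qᵀ(AᵀA)⁻¹q`. -/
noncomputable def errQ {p n : ℕ} (A : Matrix (Fin p) (Fin n) ℝ) (q : Fin n → ℝ) : ℝ :=
  (l2Sens A) ^ 2 * (q ⬝ᵥ ((Aᵀ * A)⁻¹).mulVec q)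

section Helpers
variable {n : ℕ}

lemma quad_nonneg' {M : Matrix (Fin n) (Fin n) ℝ} (hM : M.PosSemidef) (x : Fin n → ℝ) :
    0 ≤ x ⬝ᵥ M.mulVec x := by simpa using hM.dotProduct_mulVec_nonneg x

lemma isUnit_of_rank_eq' {M : Matrix (Fin n) (Fin n) ℝ} (h : M.rank = n) : IsUnit M := by
  rw [← Matrix.mulVec_injective_iff_isUnit]
  have htop : LinearMap.range M.mulVecLin = ⊤ := by
    apply Submodule.eq_top_of_finrank_eq
    have : M.rank = Module.finrank ℝ (LinearMap.range M.mulVecLin) := rfl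
    rw [← this, h]
    simp
  have hsurj : Function.Surjective M.mulVecLin := LinearMap.range_eq_top.mp htop
  have hinj : Function.Injective M.mulVecLin :=
    (LinearMap.injective_iff_surjective).mpr hsurj
  exact hinj

lemma transpose_mul_self_symm {p : ℕ} (A : Matrix (Fin p) (Fin n) ℝ) : (Aᵀ * A)ᵀ = Aᵀ * A := by
  rw [Matrix.transpose_mul, Matrix.transpose_transpose]

lemma posDef_of_rank' {p : ℕ} {A : Matrix (Fin p) (Fin n) ℝ} (h : A.rank = n) :
    (Aᵀ * A).PosDef := by
  have hpsd : (Aᵀ * A).PosSemidef := by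
    have := Matrix.posSemidef_conjTranspose_mul_self A
    simpa using this
  have hu : IsUnit (Aᵀ * A) :=
    isUnit_of_rank_eq' (by rw [Matrix.rank_transpose_mul_self, h])
  refine Matrix.PosDef.of_dotProduct_mulVec_pos hpsd.1 (fun x hx => ?_)
  rcases lt_or_eq_of_le (hpsd.dotProduct_mulVec_nonneg x) with hlt | heq
  · simpa using hlt
  · exfalso
    have h0 : (Aᵀ * A).mulVec x = 0 := (hpsd.dotProduct_mulVec_zero_iff x).mp heq.symm
    have hinj := Matrix.mulVec_injective_iff_isUnit.mpr hu
    exact hx (hinj (by simpa using h0))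

lemma symm_dot {M : Matrix (Fin n) (Fin n) ℝ} (hM : Mᵀ = M) (x y : Fin n → ℝ) :
    x ⬝ᵥ M.mulVec y = y ⬝ᵥ M.mulVec x := by
  rw [Matrix.dotProduct_mulVec, ← Matrix.mulVec_transpose, hM, dotProduct_comm]

lemma inv_form_antitone' {M N : Matrix (Fin n) (Fin n) ℝ} (hM : M.PosDef) (hN : N.PosDef)
    (h : ∀ x, x ⬝ᵥ M.mulVec x ≤ x ⬝ᵥ N.mulVec x) (q : Fin n → ℝ) :
    q ⬝ᵥ N⁻¹.mulVec q ≤ q ⬝ᵥ M⁻¹.mulVec q := by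
  have hMs : Mᵀ = M := by have := hM.1; exact (show M.IsSymm by simpa using this)
  have hMdet : IsUnit M.det := isUnit_iff_ne_zero.mpr hM.det_pos.ne'
  have hNdet : IsUnit N.det := isUnit_iff_ne_zero.mpr hN.det_pos.ne'
  set y := N⁻¹.mulVec q with hy
  set z := M⁻¹.mulVec q with hz
  have hMz : M.mulVec z = q := by
    rw [hz, Matrix.mulVec_mulVec, Matrix.mul_nonsing_inv M hMdet, Matrix.one_mulVec]
  have hNy : N.mulVec y = q := by
    rw [hy, Matrix.mulVec_mulVec, Matrix.mul_nonsing_inv N hNdet, Matrix.one_mulVec]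
  have h0 : 0 ≤ (y - z) ⬝ᵥ M.mulVec (y - z) := quad_nonneg' hM.posSemidef _
  rw [Matrix.mulVec_sub, dotProduct_sub, sub_dotProduct,
    sub_dotProduct] at h0
  have e1 : y ⬝ᵥ M.mulVec z = y ⬝ᵥ q := by rw [hMz]
  have e2 : z ⬝ᵥ M.mulVec y = y ⬝ᵥ q := by rw [symm_dot hMs, hMz]
  have e3 : z ⬝ᵥ M.mulVec z = z ⬝ᵥ q := by rw [hMz]
  have e4 : y ⬝ᵥ M.mulVec y ≤ y ⬝ᵥ q := by
    calc y ⬝ᵥ M.mulVec y ≤ y ⬝ᵥ N.mulVec y := h y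
    _ = y ⬝ᵥ q := by rw [hNy]
  have goal1 : y ⬝ᵥ q ≤ z ⬝ᵥ q := by linarith [h0, e1, e2, e3, e4]
  calc q ⬝ᵥ N⁻¹.mulVec q = y ⬝ᵥ q := by rw [dotProduct_comm]
  _ ≤ z ⬝ᵥ q := goal1
  _ = q ⬝ᵥ M⁻¹.mulVec q := by rw [dotProduct_comm]

lemma single_pair (M : Matrix (Fin n) (Fin n) ℝ) (i j : Fin n) :
    (Pi.single i 1 : Fin n → ℝ) ⬝ᵥ M.mulVec (Pi.single j 1) = M i j := by
  rw [Matrix.mulVec_single, single_dotProduct]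
  simp

lemma eq_of_forms_eq {P Q : Matrix (Fin n) (Fin n) ℝ} (hP : Pᵀ = P) (hQ : Qᵀ = Q)
    (h : ∀ x, x ⬝ᵥ P.mulVec x = x ⬝ᵥ Q.mulVec x) : P = Q := by
  ext i j
  have h1 := h (Pi.single i 1 + Pi.single j 1)
  have h2 := h (Pi.single i 1)
  have h3 := h (Pi.single j 1)
  rw [single_pair, single_pair] at h2 h3
  have hPs : P j i = P i j := by
    have e := Matrix.transpose_apply (M := P) i j
    rw [hP] at e; exact e.symm
  have hQs : Q j i = Q i j := by
    have e := Matrix.transpose_apply (M := Q) i j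
    rw [hQ] at e; exact e.symm
  simp only [Matrix.mulVec_add, dotProduct_add, add_dotProduct,
    single_pair] at h1
  linarith

lemma eq_of_forms_le_of_diag_eq {P Q : Matrix (Fin n) (Fin n) ℝ} (hP : Pᵀ = P) (hQ : Qᵀ = Q)
    (h : ∀ x, x ⬝ᵥ P.mulVec x ≤ x ⬝ᵥ Q.mulVec x) (hdiag : ∀ i, P i i = Q i i) : P = Q := by
  ext i j
  have h1 := h (Pi.single i 1 + Pi.single j 1)
  have h2 := h (Pi.single i 1 - Pi.single j 1)
  have hPs : P j i = P i j := by
    have e := Matrix.transpose_apply (M := P) i j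
    rw [hP] at e; exact e.symm
  have hQs : Q j i = Q i j := by
    have e := Matrix.transpose_apply (M := Q) i j
    rw [hQ] at e; exact e.symm
  simp only [Matrix.mulVec_add, dotProduct_add, add_dotProduct,
    Matrix.mulVec_sub, dotProduct_sub, sub_dotProduct,
    single_pair] at h1 h2
  have di := hdiag i
  have dj := hdiag j
  linarith

lemma posDef_smul' {c : ℝ} (hc : 0 < c) {M : Matrix (Fin n) (Fin n) ℝ} (hM : M.PosDef) :
    (c • M).PosDef := by
  refine Matrix.PosDef.of_dotProduct_mulVec_pos ?_ (fun x hx => ?_)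
  · have h1 := hM.1
    unfold Matrix.IsHermitian at h1 ⊢
    rw [Matrix.conjTranspose_smul, h1]
    simp
  · have h2 := hM.dotProduct_mulVec_pos hx
    rw [Matrix.smul_mulVec]
    have : x ⬝ᵥ (c • M.mulVec x) = c * (x ⬝ᵥ M.mulVec x) := by
      simp [dotProduct_smul]
    simp only [star_trivial] at h2 ⊢
    rw [this]
    exact mul_pos hc (by simpa using h2)

lemma smul_inv_eq' {c : ℝ} (hc : 0 < c) {M : Matrix (Fin n) (Fin n) ℝ} (hdet : IsUnit M.det) :
    (c⁻¹ • M)⁻¹ = c • M⁻¹ := by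
  haveI : Invertible c⁻¹ := invertibleOfNonzero (inv_ne_zero hc.ne')
  have h := Matrix.inv_smul (A := M) c⁻¹ hdet
  rw [invOf_eq_inv, inv_inv] at h
  exact h

lemma l2Sens_eq_of_max {p : ℕ} (A : Matrix (Fin p) (Fin n) ℝ) (hn : 0 < n) (j0 : Fin n)
    (hj0 : ∀ j, (∑ i, A i j ^ 2) ≤ ∑ i, A i j0 ^ 2) :
    l2Sens A = Real.sqrt (∑ i, A i j0 ^ 2) := by
  haveI : Nonempty (Fin n) := ⟨⟨0, hn⟩⟩
  unfold l2Sens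
  refine le_antisymm (ciSup_le fun j => Real.sqrt_le_sqrt (hj0 j)) ?_
  exact le_ciSup (f := fun j => Real.sqrt (∑ i, A i j ^ 2))
    (Set.Finite.bddAbove (Set.finite_range _)) j0

lemma colsq_pos_of_rank {p : ℕ} {A : Matrix (Fin p) (Fin n) ℝ} (hn : 0 < n) (hA : A.rank = n)
    (j0 : Fin n) (hj0 : ∀ j, (∑ i, A i j ^ 2) ≤ ∑ i, A i j0 ^ 2) :
    0 < ∑ i, A i j0 ^ 2 := by
  rcases (Finset.sum_nonneg fun i _ => sq_nonneg (A i j0)).lt_or_eq with h | h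
  · exact h
  · exfalso
    have hA0 : A = 0 := by
      ext i j
      have hle := hj0 j
      have hz : ∑ i, A i j ^ 2 = 0 :=
        le_antisymm (h ▸ hle) (Finset.sum_nonneg fun i _ => sq_nonneg _)
      have := (Finset.sum_eq_zero_iff_of_nonneg (fun i _ => sq_nonneg (A i j))).mp hz i
        (Finset.mem_univ i)
      simpa using sq_eq_zero_iff.mp this
    rw [hA0, Matrix.rank_zero] at hA
    omega

lemma ite_prod_sum (t : Fin n → ℝ) (j k : Fin n) :
    ∑ k' : Fin n, (if k' = j then t j else 0) * (if k' = k then t k else 0) =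
      if j = k then t j * t k else 0 := by
  simp only [ite_mul, zero_mul, Finset.sum_ite_eq', Finset.mem_univ, if_true, mul_ite, mul_zero]
  simp [eq_comm]

end Helpers

/-- **Minimal strategies are exactly the column-uniform ones.**
A strategy matrix `A` (full column rank `n`) is minimal — i.e., no strategy `B` satisfies
`Error_B(q) ≤ Error_A(q)` for all queries `q` with strict inequality for some `q` —
if and only if all columns of `A` have the same Euclidean norm. -/
theorem minimal_iff_column_uniform (n p : ℕ) (hn : 0 < n)
    (A : Matrix (Fin p) (Fin n) ℝ) (hA : A.rank = n) :
    (¬ ∃ (p' : ℕ) (B : Matrix (Fin p') (Fin n) ℝ), B.rank = n ∧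
        (∀ q : Fin n → ℝ, errQ B q ≤ errQ A q) ∧ (∃ q : Fin n → ℝ, errQ B q < errQ A q)) ↔
      (∀ j₁ j₂ : Fin n, Real.sqrt (∑ i, (A i j₁) ^ 2) = Real.sqrt (∑ i, (A i j₂) ^ 2)) := by
  haveI : Nonempty (Fin n) := ⟨⟨0, hn⟩⟩
  have hMA : (Aᵀ * A).PosDef := posDef_of_rank' hA
  constructor
  · -- minimal → uniform
    intro hmin j₁ j₂
    by_contra hne
    apply hmin
    obtain ⟨j0, hj0⟩ := Finite.exists_max fun j => ∑ i, A i j ^ 2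
    have hfne : (∑ i, A i j₁ ^ 2) ≠ ∑ i, A i j₂ ^ 2 := fun h => hne (by rw [h])
    have hex : ∃ jx, (∑ i, A i jx ^ 2) < ∑ i, A i j0 ^ 2 := by
      by_contra hno
      push_neg at hno
      have e1 : (∑ i, A i j₁ ^ 2) = ∑ i, A i j0 ^ 2 := le_antisymm (hj0 j₁) (hno j₁)
      have e2 : (∑ i, A i j₂ ^ 2) = ∑ i, A i j0 ^ 2 := le_antisymm (hj0 j₂) (hno j₂)
      exact hfne (e1.trans e2.symm)
    obtain ⟨jx, hjx⟩ := hex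
    set m2 := ∑ i, A i j0 ^ 2 with hm2
    have hm2pos : 0 < m2 := colsq_pos_of_rank hn hA j0 hj0
    set t : Fin n → ℝ := fun j => Real.sqrt (m2 - ∑ i, A i j ^ 2) with ht
    have htsq : ∀ j, t j ^ 2 = m2 - ∑ i, A i j ^ 2 := fun j =>
      Real.sq_sqrt (sub_nonneg.mpr (hj0 j))
    set B : Matrix (Fin (p + n)) (Fin n) ℝ :=
      Matrix.of fun i j => Fin.append (fun i' : Fin p => A i' j)
        (fun k : Fin n => if k = j then t j else 0) i with hB
    have e1 : ∀ (j : Fin n) (i' : Fin p), B (Fin.castAdd n i') j = A i' j := fun j i' => by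
      simp [hB, Fin.append_left]
    have e2 : ∀ (j : Fin n) (k : Fin n), B (Fin.natAdd p k) j = if k = j then t j else 0 :=
      fun j k => by simp [hB, Fin.append_right]
    have hBcol : ∀ j, (∑ i, B i j ^ 2) = m2 := by
      intro j
      rw [Fin.sum_univ_add]
      simp only [e1, e2]
      have h2 : (∑ k : Fin n, (if k = j then t j else 0) ^ 2) = t j ^ 2 := by
        simp [apply_ite (· ^ 2)]
      rw [h2, htsq j]
      ring
    have hBtB : Bᵀ * B = Aᵀ * A + Matrix.diagonal (fun j => m2 - ∑ i, A i j ^ 2) := by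
      ext j k
      rw [Matrix.mul_apply]
      simp only [Matrix.transpose_apply]
      rw [Fin.sum_univ_add]
      simp only [e1, e2]
      rw [ite_prod_sum]
      rw [Matrix.add_apply, Matrix.mul_apply]
      simp only [Matrix.transpose_apply, Matrix.diagonal_apply]
      congr 1
      by_cases hjk : j = k
      · subst hjk
        rw [if_pos rfl, if_pos rfl, ← htsq j, pow_two]
      · rw [if_neg hjk, if_neg hjk]
    have hD : (Matrix.diagonal (fun j => m2 - ∑ i, A i j ^ 2)).PosSemidef :=
      Matrix.PosSemidef.diagonal (fun j => sub_nonneg.mpr (hj0 j))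
    have hMB : (Bᵀ * B).PosDef := by
      rw [hBtB]; exact hMA.add_posSemidef hD
    have hrankB : B.rank = n := by
      have h1 := Matrix.rank_transpose_mul_self B
      rw [← h1, Matrix.rank_of_isUnit _ hMB.isUnit, Fintype.card_fin]
    have hsensB : (l2Sens B) ^ 2 = m2 := by
      have h1 : l2Sens B = Real.sqrt (∑ i, B i ⟨0, hn⟩ ^ 2) :=
        l2Sens_eq_of_max B hn ⟨0, hn⟩ (fun j => by rw [hBcol j, hBcol ⟨0, hn⟩])
      rw [h1, hBcol, Real.sq_sqrt hm2pos.le]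
    have hsensA : (l2Sens A) ^ 2 = m2 := by
      rw [l2Sens_eq_of_max A hn j0 hj0, Real.sq_sqrt hm2pos.le]
    have hformle : ∀ x : Fin n → ℝ, x ⬝ᵥ (Aᵀ * A).mulVec x ≤ x ⬝ᵥ (Bᵀ * B).mulVec x := by
      intro x
      rw [hBtB, Matrix.add_mulVec, dotProduct_add]
      exact le_add_of_nonneg_right (quad_nonneg' hD x)
    have hinvle : ∀ q : Fin n → ℝ,
        q ⬝ᵥ ((Bᵀ * B)⁻¹).mulVec q ≤ q ⬝ᵥ ((Aᵀ * A)⁻¹).mulVec q :=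
      fun q => inv_form_antitone' hMA hMB hformle q
    refine ⟨p + n, B, hrankB, fun q => ?_, ?_⟩
    · unfold errQ
      rw [hsensA, hsensB]
      exact mul_le_mul_of_nonneg_left (hinvle q) hm2pos.le
    · by_contra hno
      push_neg at hno
      have heq : ∀ q : Fin n → ℝ,
          q ⬝ᵥ ((Bᵀ * B)⁻¹).mulVec q = q ⬝ᵥ ((Aᵀ * A)⁻¹).mulVec q := by
        intro q
        have h1 := hno q
        unfold errQ at h1
        rw [hsensA, hsensB] at h1
        exact le_antisymm (hinvle q) (le_of_mul_le_mul_left h1 hm2pos)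
      have hsymB : ((Bᵀ * B)⁻¹)ᵀ = (Bᵀ * B)⁻¹ := by
        rw [Matrix.transpose_nonsing_inv, transpose_mul_self_symm]
      have hsymA : ((Aᵀ * A)⁻¹)ᵀ = (Aᵀ * A)⁻¹ := by
        rw [Matrix.transpose_nonsing_inv, transpose_mul_self_symm]
      have hInv : (Bᵀ * B)⁻¹ = (Aᵀ * A)⁻¹ := eq_of_forms_eq hsymB hsymA heq
      have hMM : Bᵀ * B = Aᵀ * A := by
        have h2 := congrArg (·⁻¹) hInv
        simpa [Matrix.nonsing_inv_nonsing_inv _ (isUnit_iff_ne_zero.mpr hMB.det_pos.ne'),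
          Matrix.nonsing_inv_nonsing_inv _ (isUnit_iff_ne_zero.mpr hMA.det_pos.ne')] using h2
      have hx := congrFun (congrFun (hBtB.symm.trans hMM) jx) jx
      rw [Matrix.add_apply, Matrix.diagonal_apply_eq] at hx
      linarith [hx]
  · -- uniform → minimal
    rintro huni ⟨p', B, hBrank, hle, q₀, hlt⟩
    simp only [errQ] at hle hlt
    have hMB : (Bᵀ * B).PosDef := posDef_of_rank' hBrank
    set j0 : Fin n := ⟨0, hn⟩ with hj0def
    have hfj : ∀ j, (∑ i, A i j ^ 2) = ∑ i, A i j0 ^ 2 := by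
      intro j
      have h1 := huni j j0
      have h2 : (0:ℝ) ≤ ∑ i, A i j ^ 2 := Finset.sum_nonneg fun i _ => sq_nonneg _
      have h3 : (0:ℝ) ≤ ∑ i, A i j0 ^ 2 := Finset.sum_nonneg fun i _ => sq_nonneg _
      calc (∑ i, A i j ^ 2) = Real.sqrt (∑ i, A i j ^ 2) ^ 2 := (Real.sq_sqrt h2).symm
      _ = Real.sqrt (∑ i, A i j0 ^ 2) ^ 2 := by rw [h1]
      _ = ∑ i, A i j0 ^ 2 := Real.sq_sqrt h3
    have hdA : (l2Sens A) ^ 2 = ∑ i, A i j0 ^ 2 := by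
      rw [l2Sens_eq_of_max A hn j0 (fun j => (hfj j).le),
        Real.sq_sqrt (Finset.sum_nonneg fun i _ => sq_nonneg _)]
    set d := (l2Sens A) ^ 2 with hd
    have hdpos : 0 < d := by
      rw [hdA]; exact colsq_pos_of_rank hn hA j0 (fun j => (hfj j).le)
    obtain ⟨jB, hjB⟩ := Finite.exists_max fun j => ∑ i, B i j ^ 2
    have hcB : (l2Sens B) ^ 2 = ∑ i, B i jB ^ 2 := by
      rw [l2Sens_eq_of_max B hn jB hjB,
        Real.sq_sqrt (Finset.sum_nonneg fun i _ => sq_nonneg _)]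
    set c := (l2Sens B) ^ 2 with hc
    have hcpos : 0 < c := by
      rw [hcB]; exact colsq_pos_of_rank hn hBrank jB hjB
    have hBcolle : ∀ j, (∑ i, B i j ^ 2) ≤ c := fun j => hcB ▸ hjB j
    set M := c⁻¹ • (Bᵀ * B) with hM
    set N := d⁻¹ • (Aᵀ * A) with hN
    have hMp : M.PosDef := posDef_smul' (inv_pos.mpr hcpos) hMB
    have hNp : N.PosDef := posDef_smul' (inv_pos.mpr hdpos) hMA
    have hMinv : M⁻¹ = c • (Bᵀ * B)⁻¹ :=
      smul_inv_eq' hcpos (isUnit_iff_ne_zero.mpr hMB.det_pos.ne')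
    have hNinv : N⁻¹ = d • (Aᵀ * A)⁻¹ :=
      smul_inv_eq' hdpos (isUnit_iff_ne_zero.mpr hMA.det_pos.ne')
    have hformle : ∀ x : Fin n → ℝ, x ⬝ᵥ M⁻¹.mulVec x ≤ x ⬝ᵥ N⁻¹.mulVec x := by
      intro x
      rw [hMinv, hNinv, Matrix.smul_mulVec, Matrix.smul_mulVec]
      have eA : x ⬝ᵥ (c • ((Bᵀ * B)⁻¹.mulVec x)) = c * (x ⬝ᵥ (Bᵀ * B)⁻¹.mulVec x) := by simp
      have eB : x ⬝ᵥ (d • ((Aᵀ * A)⁻¹.mulVec x)) = d * (x ⬝ᵥ (Aᵀ * A)⁻¹.mulVec x) := by simp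
      rw [eA, eB]
      exact hle x
    have hforms : ∀ x : Fin n → ℝ, x ⬝ᵥ N.mulVec x ≤ x ⬝ᵥ M.mulVec x := by
      intro x
      have h1 := inv_form_antitone' hMp.inv hNp.inv hformle x
      rwa [Matrix.nonsing_inv_nonsing_inv _ (isUnit_iff_ne_zero.mpr hMp.det_pos.ne'),
        Matrix.nonsing_inv_nonsing_inv _ (isUnit_iff_ne_zero.mpr hNp.det_pos.ne')] at h1
    have hdiagle : ∀ i, N i i ≤ M i i := by
      intro i
      have h1 := hforms (Pi.single i 1)
      rwa [single_pair, single_pair] at h1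
    have hMBdiag : ∀ j : Fin n, (Bᵀ * B) j j = ∑ i, B i j ^ 2 := by
      intro j; rw [Matrix.mul_apply]; simp [Matrix.transpose_apply, pow_two]
    have hMAdiag : ∀ j : Fin n, (Aᵀ * A) j j = ∑ i, A i j ^ 2 := by
      intro j; rw [Matrix.mul_apply]; simp [Matrix.transpose_apply, pow_two]
    have hNdiag : ∀ i : Fin n, N i i = 1 := by
      intro i
      have h1 : N i i = d⁻¹ * ((Aᵀ * A) i i) := by rw [hN]; simp
      rw [h1, hMAdiag i, hfj i, ← hdA]
      exact inv_mul_cancel₀ hdpos.ne'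
    have hsumN : (∑ i, N i i) = (n : ℝ) := by
      simp [hNdiag]
    have hsumM : (∑ i, M i i) ≤ (n : ℝ) := by
      have h1 : ∀ i : Fin n, M i i ≤ 1 := by
        intro i
        have h2 : M i i = c⁻¹ * ((Bᵀ * B) i i) := by rw [hM]; simp
        rw [h2, hMBdiag i]
        calc c⁻¹ * (∑ k, B k i ^ 2) ≤ c⁻¹ * c :=
          mul_le_mul_of_nonneg_left (hBcolle i) (inv_pos.mpr hcpos).le
        _ = 1 := inv_mul_cancel₀ hcpos.ne'
      calc (∑ i, M i i) ≤ ∑ _i : Fin n, (1:ℝ) := Finset.sum_le_sum (fun i _ => h1 i)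
      _ = n := by simp
    have hsums : (∑ i, N i i) = ∑ i, M i i :=
      le_antisymm (Finset.sum_le_sum fun i _ => hdiagle i) (by rw [hsumN]; exact hsumM)
    have hdiageq : ∀ i, N i i = M i i := fun i =>
      (Finset.sum_eq_sum_iff_of_le (fun i _ => hdiagle i)).mp hsums i (Finset.mem_univ i)
    have hsymM : Mᵀ = M := by
      rw [hM, Matrix.transpose_smul, transpose_mul_self_symm]
    have hsymN : Nᵀ = N := by
      rw [hN, Matrix.transpose_smul, transpose_mul_self_symm]
    have hMN : N = M := eq_of_forms_le_of_diag_eq hsymN hsymM hforms hdiageq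
    have hfinal : c * (q₀ ⬝ᵥ (Bᵀ * B)⁻¹.mulVec q₀) = d * (q₀ ⬝ᵥ (Aᵀ * A)⁻¹.mulVec q₀) := by
      have h1 : M⁻¹ = N⁻¹ := by rw [hMN]
      rw [hMinv, hNinv] at h1
      have h2 := congrArg (fun X : Matrix (Fin n) (Fin n) ℝ => q₀ ⬝ᵥ X.mulVec q₀) h1
      simpa [Matrix.smul_mulVec, smul_eq_mul] using h2
    linarith [hlt, hfinal]
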